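/- Let M ∈ R^{n×n} have nonnegative entries with strictly positive diagonal, and let b ∈ R^n with strictly positive entries. If for all i, b_i > Σ_{j≠i} m_{ij}·b_j/m_{jj}, then M is invertible and all entries of M^{−1}b are nonnegative. -/

import Mathlib

open Finset

theorem diagonally_dominant_inverse_nonneg (n : ℕ)
    (M : Matrix (Fin n) (Fin n) ℝ) (b : Fin n → ℝ)
    (hM : ∀ i j, 0 ≤ M i j) (hdiag : ∀ i, 0 < M i i) (hb : ∀ i, 0 < b i)
    (h : ∀ i, ∑ j ∈ Finset.univ.erase i, M i j * b j / M j j < b i) :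
    IsUnit M ∧ ∀ i, 0 ≤ M⁻¹.mulVec b i := by
  -- Row equation for scaled variables y j = x j * M j j / b j
  have hrow : ∀ (x v : Fin n → ℝ), M.mulVec x = v → ∀ i,
      b i * (x i * M i i / b i)
        + ∑ j ∈ univ.erase i, (M i j * b j / M j j) * (x j * M j j / b j) = v i := by
    intro x v hx i
    have h1 : ∀ j ∈ univ.erase i,
        (M i j * b j / M j j) * (x j * M j j / b j) = M i j * x j := by
      intro j _
      field_simp [(hb j).ne', (hdiag j).ne']
    rw [Finset.sum_congr rfl h1]
    have h2 : b i * (x i * M i i / b i) = M i i * x i := by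
      field_simp [(hb i).ne']
    rw [h2, Finset.add_sum_erase _ (fun j => M i j * x j) (mem_univ i), ← hx]
    simp [Matrix.mulVec, dotProduct]
  -- the sum of off-diagonal coefficients is nonneg
  have hcnn : ∀ i j, 0 ≤ M i j * b j / M j j := by
    intro i j
    exact div_nonneg (mul_nonneg (hM i j) (hb j).le) (hdiag j).le
  -- kernel is trivial
  have hker : ∀ x : Fin n → ℝ, M.mulVec x = 0 → x = 0 := by
    intro x hx
    by_contra hne
    obtain ⟨i0, hi0⟩ := Function.ne_iff.mp hne
    set y : Fin n → ℝ := fun j => x j * M j j / b j with hy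
    obtain ⟨l, -, hl⟩ := Finset.exists_max_image univ (fun j => |y j|) ⟨i0, mem_univ i0⟩
    have hyi0 : 0 < |y i0| := by
      have : y i0 ≠ 0 := by
        simp only [hy]
        intro hc
        rcases div_eq_zero_iff.mp hc with h' | h'
        · rcases mul_eq_zero.mp h' with h'' | h''
          · exact hi0 (by simpa using h'')
          · exact (hdiag i0).ne' h''
        · exact (hb i0).ne' h'
      exact abs_pos.mpr this
    have hyl : 0 < |y l| := lt_of_lt_of_le hyi0 (hl i0 (mem_univ i0))
    have heq := hrow x 0 hx l
    simp only [Pi.zero_apply] at heq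
    have h3 : b l * |y l| = |∑ j ∈ univ.erase l, (M l j * b j / M l j * 0 + M l j * b j / M j j) * y j| := by
      have : b l * y l = -∑ j ∈ univ.erase l, (M l j * b j / M j j) * y j := by linarith
      rw [show b l * |y l| = |b l * y l| by
        rw [abs_mul, abs_of_pos (hb l)]]
      rw [this, abs_neg]
      congr 1
      apply Finset.sum_congr rfl
      intro j _
      ring
    have h4 : |∑ j ∈ univ.erase l, (M l j * b j / M l j * 0 + M l j * b j / M j j) * y j|
        ≤ ∑ j ∈ univ.erase l, (M l j * b j / M j j) * |y l| := by
      refine le_trans (Finset.abs_sum_le_sum_abs _ _) ?_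
      apply Finset.sum_le_sum
      intro j hj
      rw [show (M l j * b j / M l j * 0 + M l j * b j / M j j) * y j
          = (M l j * b j / M j j) * y j by ring, abs_mul,
        abs_of_nonneg (hcnn l j)]
      exact mul_le_mul_of_nonneg_left (hl j (mem_univ j)) (hcnn l j)
    have h5 : ∑ j ∈ univ.erase l, (M l j * b j / M j j) * |y l|
        = (∑ j ∈ univ.erase l, M l j * b j / M j j) * |y l| := by
      rw [Finset.sum_mul]
    have h6 : (∑ j ∈ univ.erase l, M l j * b j / M j j) * |y l| < b l * |y l| :=
      mul_lt_mul_of_pos_right (h l) hyl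
    rw [h3] at h6
    nlinarith [h4, h5, h6]
  -- determinant nonzero
  have hdet : M.det ≠ 0 := by
    intro hd
    obtain ⟨v, hv, hv0⟩ := (Matrix.exists_mulVec_eq_zero_iff).mpr hd
    exact hv (hker v hv0)
  have hunit : IsUnit M := (Matrix.isUnit_iff_isUnit_det M).mpr (isUnit_iff_ne_zero.mpr hdet)
  refine ⟨hunit, ?_⟩
  -- now nonnegativity of x = M⁻¹ b
  set x : Fin n → ℝ := M⁻¹.mulVec b with hxdef
  have hx : M.mulVec x = b := by
    rw [hxdef, Matrix.mulVec_mulVec, Matrix.mul_nonsing_inv _ (isUnit_iff_ne_zero.mpr hdet), Matrix.one_mulVec]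
  by_contra hcon
  push_neg at hcon
  obtain ⟨i0, hi0⟩ := hcon
  set y : Fin n → ℝ := fun j => x j * M j j / b j with hy
  have hyi0 : y i0 < 0 := by
    simp only [hy]
    exact div_neg_of_neg_of_pos (mul_neg_of_neg_of_pos hi0 (hdiag i0)) (hb i0)
  obtain ⟨k, -, hk⟩ := Finset.exists_min_image univ y ⟨i0, mem_univ i0⟩
  obtain ⟨l, -, hl⟩ := Finset.exists_max_image univ y ⟨i0, mem_univ i0⟩
  have hyk : y k < 0 := lt_of_le_of_lt (hk i0 (mem_univ i0)) hyi0
  have heqk := hrow x b hx k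
  have heql := hrow x b hx l
  rcases le_or_gt (y l) 0 with hle | hlt
  · -- all y ≤ 0 : row i0 gives contradiction
    have heqi := hrow x b hx i0
    have hsum : ∑ j ∈ univ.erase i0, (M i0 j * b j / M j j) * (x j * M j j / b j) ≤ 0 := by
      apply Finset.sum_nonpos
      intro j hj
      have : y j ≤ 0 := le_trans (hl j (mem_univ j)) hle
      exact mul_nonpos_of_nonneg_of_nonpos (hcnn i0 j) this
    have hneg : b i0 * (x i0 * M i0 i0 / b i0) < 0 :=
      mul_neg_of_pos_of_neg (hb i0) hyi0
    have := hb i0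
    linarith
  · -- y l > 0
    -- from row k : b k * y k ≥ b k - (∑ c) * y l > b k - b k * y l
    have hSk : ∑ j ∈ univ.erase k, (M k j * b j / M j j) * (x j * M j j / b j)
        ≤ (∑ j ∈ univ.erase k, M k j * b j / M j j) * y l := by
      rw [Finset.sum_mul]
      apply Finset.sum_le_sum
      intro j hj
      exact mul_le_mul_of_nonneg_left (hl j (mem_univ j)) (hcnn k j)
    have hk1 : (∑ j ∈ univ.erase k, M k j * b j / M j j) * y l < b k * y l :=
      mul_lt_mul_of_pos_right (h k) hlt
    have hk2 : b k * y k > b k - b k * y l := by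
      have : b k * y k = b k - ∑ j ∈ univ.erase k, (M k j * b j / M j j) * (x j * M j j / b j) := by
        linarith [heqk]
      linarith
    have hk3 : y k > 1 - y l := by
      have hb' := hb k
      nlinarith
    -- from row l : b l * y l ≤ b l - (∑ c) * y k < b l - b l * y k
    have hSl : (∑ j ∈ univ.erase l, M l j * b j / M j j) * y k
        ≤ ∑ j ∈ univ.erase l, (M l j * b j / M j j) * (x j * M j j / b j) := by
      rw [Finset.sum_mul]
      apply Finset.sum_le_sum
      intro j hj
      exact mul_le_mul_of_nonneg_left (hk j (mem_univ j)) (hcnn l j)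
    have hl1 : b l * y k < (∑ j ∈ univ.erase l, M l j * b j / M j j) * y k := by
      have := h l
      nlinarith
    have hl2 : b l * y l < b l - b l * y k := by
      have : b l * y l = b l - ∑ j ∈ univ.erase l, (M l j * b j / M j j) * (x j * M j j / b j) := by
        linarith [heql]
      linarith
    have hl3 : y l < 1 - y k := by
      have hb' := hb l
      nlinarith
    linarith
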